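/- In the four-agent economy with claims κ₁ = κ₂ = 1/3, κ₃ = κ₄ = 1/6 and linear utilities given by ν₁(F) = (3/2)λ(F ∩ [0,2/3)), ν₂(F) = (3/2)λ(F \ [1/3,2/3)), ν₃(F) = (5/3)λ(F ∩ [1/3,2/3)) + (8/3)λ(F ∩ [2/3,5/6)), ν₄(F) = (5/3)λ(F ∩ [1/3,2/3)) + (8/3)λ(F ∩ [5/6,1]): (a) for π = {A,B,C} with A = [0,1/3), B = [1/3,2/3), C = [2/3,1], unit prices on all three commodities together with x¹ = (1/3,0,0), x² = (0,0,1/3), x³ = x⁴ = (0,1/6,0) form a competitive equilibrium of E(π); (b) for ρ = {A,B,C¹,C²} with C¹ = [2/3,5/6), C² = [5/6,1], unit prices on all four commodities together with y¹ = (0,1/3,0,0), y² = (1/3,0,0,0), y³ = (0,0,1/6,0), y⁴ = (0,0,0,1/6) form a competitive equilibrium of E(ρ). In particular, agent 1's equilibrium bundle is positive only on A under π and positive only on B under ρ, even though A and B belong to both classifications and their relative price equals 1 in both equilibria. -/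
import Mathlib


open MeasureTheory Set
open scoped ENNReal Classical

noncomputable section

/-- Lebesgue measure of a set, as a real number. -/
def lvol (C : Set ℝ) : ℝ := (volume C).toReal

/-- Linear utility over tradable bundles: `V(π,x) = ∑_{C∈π} (x_C/λ(C)) ν(C)`,
where the evaluation of each commodity is given by the set function `νf`. -/
def Vlin (parts : Finset (Set ℝ)) (νf : Set ℝ → ℝ) (x : Set ℝ → ℝ) : ℝ :=
  ∑ C ∈ parts, (x C / lvol C) * νf C

/-- Competitive equilibrium of the economy on the commodities `parts` with claims `κ`
and utilities `Vf` on tradable bundles. -/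
def IsEqm {n : ℕ} (parts : Finset (Set ℝ)) (κ : Fin n → ℝ)
    (Vf : Fin n → (Set ℝ → ℝ) → ℝ) (p : Set ℝ → ℝ) (x : Fin n → Set ℝ → ℝ) : Prop :=
  (∀ C ∈ parts, 0 ≤ p C) ∧
  (∀ i, ∀ C ∈ parts, 0 ≤ x i C) ∧
  (∀ C ∈ parts, ∑ i, x i C ≤ lvol C) ∧
  (∀ i, ∑ C ∈ parts, p C * x i C ≤ κ i * ∑ C ∈ parts, p C * lvol C) ∧
  (∀ i, ∀ y : Set ℝ → ℝ, (∀ C ∈ parts, 0 ≤ y C) → Vf i (x i) < Vf i y →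
    κ i * ∑ C ∈ parts, p C * lvol C < ∑ C ∈ parts, p C * y C)

namespace Stmt12

def ν₁ (F : Set ℝ) : ℝ := (3/2) * lvol (F ∩ Set.Ico 0 (2/3))
def ν₂ (F : Set ℝ) : ℝ := (3/2) * lvol (F \ Set.Ico (1/3) (2/3))
def ν₃ (F : Set ℝ) : ℝ :=
  (5/3) * lvol (F ∩ Set.Ico (1/3) (2/3)) + (8/3) * lvol (F ∩ Set.Ico (2/3) (5/6))
def ν₄ (F : Set ℝ) : ℝ :=
  (5/3) * lvol (F ∩ Set.Ico (1/3) (2/3)) + (8/3) * lvol (F ∩ Set.Icc (5/6) 1)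

/-- The evaluation measures of the four agents. -/
def νs : Fin 4 → Set ℝ → ℝ := ![ν₁, ν₂, ν₃, ν₄]

/-- Claims `κ₁ = κ₂ = 1/3`, `κ₃ = κ₄ = 1/6`. -/
def κ : Fin 4 → ℝ := ![1/3, 1/3, 1/6, 1/6]

def A : Set ℝ := Set.Ico 0 (1/3)
def B : Set ℝ := Set.Ico (1/3) (2/3)
def C : Set ℝ := Set.Icc (2/3) 1
def C₁ : Set ℝ := Set.Ico (2/3) (5/6)
def C₂ : Set ℝ := Set.Icc (5/6) 1

/-- The classification `π = {A,B,C}`. -/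
def partsπ : Finset (Set ℝ) := {A, B, C}
/-- The refined classification `ρ = {A,B,C¹,C²}`. -/
def partsρ : Finset (Set ℝ) := {A, B, C₁, C₂}

/-- `x¹ = (1/3,0,0)`, `x² = (0,0,1/3)`, `x³ = x⁴ = (0,1/6,0)`. -/
def xs : Fin 4 → Set ℝ → ℝ :=
  ![fun S => if S = A then 1/3 else 0,
    fun S => if S = C then 1/3 else 0,
    fun S => if S = B then 1/6 else 0,
    fun S => if S = B then 1/6 else 0]

/-- `y¹ = (0,1/3,0,0)`, `y² = (1/3,0,0,0)`, `y³ = (0,0,1/6,0)`, `y⁴ = (0,0,0,1/6)`. -/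
def ys : Fin 4 → Set ℝ → ℝ :=
  ![fun S => if S = B then 1/3 else 0,
    fun S => if S = A then 1/3 else 0,
    fun S => if S = C₁ then 1/6 else 0,
    fun S => if S = C₂ then 1/6 else 0]

-- Auxiliary lemmas
lemma lvol_Ico {a b : ℝ} (h : a ≤ b) : lvol (Set.Ico a b) = b - a := by
  rw [lvol, Real.volume_Ico, ENNReal.toReal_ofReal (by linarith)]

lemma lvol_Icc {a b : ℝ} (h : a ≤ b) : lvol (Set.Icc a b) = b - a := by
  rw [lvol, Real.volume_Icc, ENNReal.toReal_ofReal (by linarith)]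

lemma lvol_empty : lvol ∅ = 0 := by simp [lvol]

lemma lvA : lvol A = 1/3 := by rw [A, lvol_Ico (by norm_num)]; norm_num
lemma lvB : lvol B = 1/3 := by rw [B, lvol_Ico (by norm_num)]; norm_num
lemma lvC : lvol C = 1/3 := by rw [C, lvol_Icc (by norm_num)]; norm_num
lemma lvC₁ : lvol C₁ = 1/6 := by rw [C₁, lvol_Ico (by norm_num)]; norm_num
lemma lvC₂ : lvol C₂ = 1/6 := by rw [C₂, lvol_Icc (by norm_num)]; norm_num

lemma inter_empty {s t : Set ℝ} (h : ∀ x, x ∈ s → x ∉ t) : s ∩ t = ∅ :=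
  Set.eq_empty_iff_forall_notMem.mpr fun x hx => h x hx.1 hx.2

lemma diff_self' {s t : Set ℝ} (h : ∀ x, x ∈ s → x ∉ t) : s \ t = s :=
  Set.ext fun x => ⟨fun hx => hx.1, fun hx => ⟨hx, h x hx⟩⟩

-- distinctness
lemma hAB : A ≠ B := by
  intro h; have h0 : (0:ℝ) ∈ A := by norm_num [A]
  rw [h] at h0; norm_num [B] at h0
lemma hAC : A ≠ C := by
  intro h; have h0 : (0:ℝ) ∈ A := by norm_num [A]
  rw [h] at h0; norm_num [C] at h0
lemma hBC : B ≠ C := by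
  intro h; have h0 : (1/3:ℝ) ∈ B := by norm_num [B]
  rw [h] at h0; norm_num [C] at h0
lemma hAC₁ : A ≠ C₁ := by
  intro h; have h0 : (0:ℝ) ∈ A := by norm_num [A]
  rw [h] at h0; norm_num [C₁] at h0
lemma hAC₂ : A ≠ C₂ := by
  intro h; have h0 : (0:ℝ) ∈ A := by norm_num [A]
  rw [h] at h0; norm_num [C₂] at h0
lemma hBC₁ : B ≠ C₁ := by
  intro h; have h0 : (1/3:ℝ) ∈ B := by norm_num [B]
  rw [h] at h0; norm_num [C₁] at h0
lemma hBC₂ : B ≠ C₂ := by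
  intro h; have h0 : (1/3:ℝ) ∈ B := by norm_num [B]
  rw [h] at h0; norm_num [C₂] at h0
lemma hC₁C₂ : C₁ ≠ C₂ := by
  intro h; have h0 : (2/3:ℝ) ∈ C₁ := by norm_num [C₁]
  rw [h] at h0; norm_num [C₂] at h0

lemma sum_π (f : Set ℝ → ℝ) : ∑ S ∈ partsπ, f S = f A + f B + f C := by
  rw [partsπ, Finset.sum_insert (by simp [hAB, hAC]),
    Finset.sum_insert (by simp [hBC]), Finset.sum_singleton]
  ring

lemma sum_ρ (f : Set ℝ → ℝ) : ∑ S ∈ partsρ, f S = f A + f B + f C₁ + f C₂ := by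
  rw [partsρ, Finset.sum_insert (by simp [hAB, hAC₁, hAC₂]),
    Finset.sum_insert (by simp [hBC₁, hBC₂]),
    Finset.sum_insert (by simp [hC₁C₂]), Finset.sum_singleton]
  ring

-- ν values
lemma ν₁A : ν₁ A = 1/2 := by
  have h : A ∩ Set.Ico (0:ℝ) (2/3) = A :=
    Set.inter_eq_left.mpr (by rw [A]; exact Set.Ico_subset_Ico le_rfl (by norm_num))
  rw [ν₁, h, lvA]; norm_num
lemma ν₁B : ν₁ B = 1/2 := by
  have h : B ∩ Set.Ico (0:ℝ) (2/3) = B :=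
    Set.inter_eq_left.mpr (by rw [B]; exact Set.Ico_subset_Ico (by norm_num) le_rfl)
  rw [ν₁, h, lvB]; norm_num
lemma ν₁C : ν₁ C = 0 := by
  have h : C ∩ Set.Ico (0:ℝ) (2/3) = ∅ := inter_empty (fun x hx hx' => by
    simp [C] at hx; simp [Set.mem_Ico] at hx'; linarith [hx.1, hx'.2])
  rw [ν₁, h, lvol_empty]; ring
lemma ν₁C₁ : ν₁ C₁ = 0 := by
  have h : C₁ ∩ Set.Ico (0:ℝ) (2/3) = ∅ := inter_empty (fun x hx hx' => by
    simp [C₁] at hx; simp [Set.mem_Ico] at hx'; linarith [hx.1, hx'.2])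
  rw [ν₁, h, lvol_empty]; ring
lemma ν₁C₂ : ν₁ C₂ = 0 := by
  have h : C₂ ∩ Set.Ico (0:ℝ) (2/3) = ∅ := inter_empty (fun x hx hx' => by
    simp [C₂] at hx; simp [Set.mem_Ico] at hx'; linarith [hx.1, hx'.2])
  rw [ν₁, h, lvol_empty]; ring

lemma ν₂A : ν₂ A = 1/2 := by
  have h : A \ Set.Ico (1/3:ℝ) (2/3) = A := diff_self' (fun x hx hx' => by
    simp [A] at hx; simp [Set.mem_Ico] at hx'; linarith [hx.2, hx'.1])
  rw [ν₂, h, lvA]; norm_num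
lemma ν₂B : ν₂ B = 0 := by
  have h : B \ Set.Ico (1/3:ℝ) (2/3) = ∅ := by rw [B]; exact Set.diff_self
  rw [ν₂, h, lvol_empty]; ring
lemma ν₂C : ν₂ C = 1/2 := by
  have h : C \ Set.Ico (1/3:ℝ) (2/3) = C := diff_self' (fun x hx hx' => by
    simp [C] at hx; simp [Set.mem_Ico] at hx'; linarith [hx.1, hx'.2])
  rw [ν₂, h, lvC]; norm_num
lemma ν₂C₁ : ν₂ C₁ = 1/4 := by
  have h : C₁ \ Set.Ico (1/3:ℝ) (2/3) = C₁ := diff_self' (fun x hx hx' => by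
    simp [C₁] at hx; simp [Set.mem_Ico] at hx'; linarith [hx.1, hx'.2])
  rw [ν₂, h, lvC₁]; norm_num
lemma ν₂C₂ : ν₂ C₂ = 1/4 := by
  have h : C₂ \ Set.Ico (1/3:ℝ) (2/3) = C₂ := diff_self' (fun x hx hx' => by
    simp [C₂] at hx; simp [Set.mem_Ico] at hx'; linarith [hx.1, hx'.2])
  rw [ν₂, h, lvC₂]; norm_num

lemma ν₃A : ν₃ A = 0 := by
  have h1 : A ∩ Set.Ico (1/3:ℝ) (2/3) = ∅ := inter_empty (fun x hx hx' => by
    simp [A] at hx; simp [Set.mem_Ico] at hx'; linarith [hx.2, hx'.1])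
  have h2 : A ∩ Set.Ico (2/3:ℝ) (5/6) = ∅ := inter_empty (fun x hx hx' => by
    simp [A] at hx; simp [Set.mem_Ico] at hx'; linarith [hx.2, hx'.1])
  rw [ν₃, h1, h2, lvol_empty]; ring
lemma ν₃B : ν₃ B = 5/9 := by
  have h1 : B ∩ Set.Ico (1/3:ℝ) (2/3) = B := by rw [B]; exact Set.inter_self _
  have h2 : B ∩ Set.Ico (2/3:ℝ) (5/6) = ∅ := inter_empty (fun x hx hx' => by
    simp [B] at hx; simp [Set.mem_Ico] at hx'; linarith [hx.2, hx'.1])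
  rw [ν₃, h1, h2, lvol_empty, lvB]; norm_num
lemma ν₃C : ν₃ C = 4/9 := by
  have h1 : C ∩ Set.Ico (1/3:ℝ) (2/3) = ∅ := inter_empty (fun x hx hx' => by
    simp [C] at hx; simp [Set.mem_Ico] at hx'; linarith [hx.1, hx'.2])
  have h2 : C ∩ Set.Ico (2/3:ℝ) (5/6) = Set.Ico (2/3:ℝ) (5/6) :=
    Set.inter_eq_right.mpr (by rw [C]; exact (Set.Ico_subset_Icc_self).trans (Set.Icc_subset_Icc le_rfl (by norm_num)))
  have h3 : lvol (Set.Ico (2/3:ℝ) (5/6)) = 1/6 := by rw [lvol_Ico (by norm_num)]; norm_num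
  rw [ν₃, h1, h2, lvol_empty, h3]; norm_num
lemma ν₃C₁ : ν₃ C₁ = 4/9 := by
  have h1 : C₁ ∩ Set.Ico (1/3:ℝ) (2/3) = ∅ := inter_empty (fun x hx hx' => by
    simp [C₁] at hx; simp [Set.mem_Ico] at hx'; linarith [hx.1, hx'.2])
  have h2 : C₁ ∩ Set.Ico (2/3:ℝ) (5/6) = C₁ := by rw [C₁]; exact Set.inter_self _
  rw [ν₃, h1, h2, lvol_empty, lvC₁]; norm_num
lemma ν₃C₂ : ν₃ C₂ = 0 := by
  have h1 : C₂ ∩ Set.Ico (1/3:ℝ) (2/3) = ∅ := inter_empty (fun x hx hx' => by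
    simp [C₂] at hx; simp [Set.mem_Ico] at hx'; linarith [hx.1, hx'.2])
  have h2 : C₂ ∩ Set.Ico (2/3:ℝ) (5/6) = ∅ := inter_empty (fun x hx hx' => by
    simp [C₂] at hx; simp [Set.mem_Ico] at hx'; linarith [hx.1, hx'.2])
  rw [ν₃, h1, h2, lvol_empty]; ring

lemma ν₄A : ν₄ A = 0 := by
  have h1 : A ∩ Set.Ico (1/3:ℝ) (2/3) = ∅ := inter_empty (fun x hx hx' => by
    simp [A] at hx; simp [Set.mem_Ico] at hx'; linarith [hx.2, hx'.1])
  have h2 : A ∩ Set.Icc (5/6:ℝ) 1 = ∅ := inter_empty (fun x hx hx' => by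
    simp [A] at hx; simp [Set.mem_Icc] at hx'; linarith [hx.2, hx'.1])
  rw [ν₄, h1, h2, lvol_empty]; ring
lemma ν₄B : ν₄ B = 5/9 := by
  have h1 : B ∩ Set.Ico (1/3:ℝ) (2/3) = B := by rw [B]; exact Set.inter_self _
  have h2 : B ∩ Set.Icc (5/6:ℝ) 1 = ∅ := inter_empty (fun x hx hx' => by
    simp [B] at hx; simp [Set.mem_Icc] at hx'; linarith [hx.2, hx'.1])
  rw [ν₄, h1, h2, lvol_empty, lvB]; norm_num
lemma ν₄C : ν₄ C = 4/9 := by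
  have h1 : C ∩ Set.Ico (1/3:ℝ) (2/3) = ∅ := inter_empty (fun x hx hx' => by
    simp [C] at hx; simp [Set.mem_Ico] at hx'; linarith [hx.1, hx'.2])
  have h2 : C ∩ Set.Icc (5/6:ℝ) 1 = Set.Icc (5/6:ℝ) 1 :=
    Set.inter_eq_right.mpr (by rw [C]; exact Set.Icc_subset_Icc (by norm_num) le_rfl)
  have h3 : lvol (Set.Icc (5/6:ℝ) 1) = 1/6 := by rw [lvol_Icc (by norm_num)]; norm_num
  rw [ν₄, h1, h2, lvol_empty, h3]; norm_num
lemma ν₄C₁ : ν₄ C₁ = 0 := by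
  have h1 : C₁ ∩ Set.Ico (1/3:ℝ) (2/3) = ∅ := inter_empty (fun x hx hx' => by
    simp [C₁] at hx; simp [Set.mem_Ico] at hx'; linarith [hx.1, hx'.2])
  have h2 : C₁ ∩ Set.Icc (5/6:ℝ) 1 = ∅ := inter_empty (fun x hx hx' => by
    simp [C₁] at hx; simp [Set.mem_Icc] at hx'; linarith [hx.2, hx'.1])
  rw [ν₄, h1, h2, lvol_empty]; ring
lemma ν₄C₂ : ν₄ C₂ = 4/9 := by
  have h1 : C₂ ∩ Set.Ico (1/3:ℝ) (2/3) = ∅ := inter_empty (fun x hx hx' => by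
    simp [C₂] at hx; simp [Set.mem_Ico] at hx'; linarith [hx.1, hx'.2])
  have h2 : C₂ ∩ Set.Icc (5/6:ℝ) 1 = C₂ := by rw [C₂]; exact Set.inter_self _
  rw [ν₄, h1, h2, lvol_empty, lvC₂]; norm_num

-- V evaluations
lemma Vπ1 (z : Set ℝ → ℝ) : Vlin partsπ ν₁ z = 3/2 * z A + 3/2 * z B := by
  rw [Vlin, sum_π, ν₁A, ν₁B, ν₁C, lvA, lvB, lvC]; ring
lemma Vπ2 (z : Set ℝ → ℝ) : Vlin partsπ ν₂ z = 3/2 * z A + 3/2 * z C := by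
  rw [Vlin, sum_π, ν₂A, ν₂B, ν₂C, lvA, lvB, lvC]; ring
lemma Vπ3 (z : Set ℝ → ℝ) : Vlin partsπ ν₃ z = 5/3 * z B + 4/3 * z C := by
  rw [Vlin, sum_π, ν₃A, ν₃B, ν₃C, lvA, lvB, lvC]; ring
lemma Vπ4 (z : Set ℝ → ℝ) : Vlin partsπ ν₄ z = 5/3 * z B + 4/3 * z C := by
  rw [Vlin, sum_π, ν₄A, ν₄B, ν₄C, lvA, lvB, lvC]; ring
lemma Vρ1 (z : Set ℝ → ℝ) : Vlin partsρ ν₁ z = 3/2 * z A + 3/2 * z B := by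
  rw [Vlin, sum_ρ, ν₁A, ν₁B, ν₁C₁, ν₁C₂, lvA, lvB, lvC₁, lvC₂]; ring
lemma Vρ2 (z : Set ℝ → ℝ) : Vlin partsρ ν₂ z = 3/2 * z A + 3/2 * z C₁ + 3/2 * z C₂ := by
  rw [Vlin, sum_ρ, ν₂A, ν₂B, ν₂C₁, ν₂C₂, lvA, lvB, lvC₁, lvC₂]; ring
lemma Vρ3 (z : Set ℝ → ℝ) : Vlin partsρ ν₃ z = 5/3 * z B + 8/3 * z C₁ := by
  rw [Vlin, sum_ρ, ν₃A, ν₃B, ν₃C₁, ν₃C₂, lvA, lvB, lvC₁, lvC₂]; ring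
lemma Vρ4 (z : Set ℝ → ℝ) : Vlin partsρ ν₄ z = 5/3 * z B + 8/3 * z C₂ := by
  rw [Vlin, sum_ρ, ν₄A, ν₄B, ν₄C₁, ν₄C₂, lvA, lvB, lvC₁, lvC₂]; ring

-- pointwise/defeq evaluation lemmas
lemma xs0 (S : Set ℝ) : xs 0 S = if S = A then 1/3 else 0 := rfl
lemma xs1 (S : Set ℝ) : xs 1 S = if S = C then 1/3 else 0 := rfl
lemma xs2 (S : Set ℝ) : xs 2 S = if S = B then 1/6 else 0 := rfl
lemma xs3 (S : Set ℝ) : xs 3 S = if S = B then 1/6 else 0 := rfl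
lemma ys0 (S : Set ℝ) : ys 0 S = if S = B then 1/3 else 0 := rfl
lemma ys1 (S : Set ℝ) : ys 1 S = if S = A then 1/3 else 0 := rfl
lemma ys2 (S : Set ℝ) : ys 2 S = if S = C₁ then 1/6 else 0 := rfl
lemma ys3 (S : Set ℝ) : ys 3 S = if S = C₂ then 1/6 else 0 := rfl
lemma νs0 : νs 0 = ν₁ := rfl
lemma νs1 : νs 1 = ν₂ := rfl
lemma νs2 : νs 2 = ν₃ := rfl
lemma νs3 : νs 3 = ν₄ := rfl
lemma κ0 : κ 0 = 1/3 := rfl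
lemma κ1 : κ 1 = 1/3 := rfl
lemma κ2 : κ 2 = 1/6 := rfl
lemma κ3 : κ 3 = 1/6 := rfl

lemma memAπ : A ∈ partsπ := by simp [partsπ]
lemma memBπ : B ∈ partsπ := by simp [partsπ]
lemma memCπ : C ∈ partsπ := by simp [partsπ]
lemma memAρ : A ∈ partsρ := by simp [partsρ]
lemma memBρ : B ∈ partsρ := by simp [partsρ]
lemma memC₁ρ : C₁ ∈ partsρ := by simp [partsρ]
lemma memC₂ρ : C₂ ∈ partsρ := by simp [partsρ]

lemma fin4_cases (i : Fin 4) : i = 0 ∨ i = 1 ∨ i = 2 ∨ i = 3 := by omega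

/-- (a) unit prices and `(x^i)` form a competitive equilibrium of `E(π)`;
(b) unit prices and `(y^i)` form a competitive equilibrium of `E(ρ)`. In particular,
agent 1's equilibrium bundle is positive only on `A` under `π` and positive only on `B`
under `ρ`, even though `A, B` belong to both classifications and their relative price
equals `1` in both equilibria. -/
theorem refinement_switches_trading_positions :
    IsEqm partsπ κ (fun i => Vlin partsπ (νs i)) (fun _ => 1) xs ∧
    IsEqm partsρ κ (fun i => Vlin partsρ (νs i)) (fun _ => 1) ys ∧
    (0 < xs 0 A ∧ ∀ S ∈ partsπ, S ≠ A → xs 0 S = 0) ∧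
    (0 < ys 0 B ∧ ∀ S ∈ partsρ, S ≠ B → ys 0 S = 0) ∧
    A ∈ partsπ ∧ B ∈ partsπ ∧ A ∈ partsρ ∧ B ∈ partsρ ∧
    ((fun _ => (1:ℝ)) A / (fun _ => (1:ℝ)) B = 1) := by
  refine ⟨⟨?_, ?_, ?_, ?_, ?_⟩, ⟨?_, ?_, ?_, ?_, ?_⟩, ⟨?_, ?_⟩, ⟨?_, ?_⟩, memAπ, memBπ, memAρ, memBρ, by norm_num⟩
  · intro S _; norm_num
  · intro i S _
    rcases fin4_cases i with rfl | rfl | rfl | rfl <;>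
      [rw [xs0]; rw [xs1]; rw [xs2]; rw [xs3]] <;> split <;> norm_num
  · intro S hS
    simp only [partsπ, Finset.mem_insert, Finset.mem_singleton] at hS
    rw [Fin.sum_univ_four, xs0, xs1, xs2, xs3]
    rcases hS with rfl | rfl | rfl
    · rw [lvA]; norm_num [hAB, hAC]
    · rw [lvB]; norm_num [Ne.symm hAB, hBC]
    · rw [lvC]; norm_num [Ne.symm hAC, Ne.symm hBC]
  · intro i
    have hw : ∑ S ∈ partsπ, (1:ℝ) * lvol S = 1 := by rw [sum_π, lvA, lvB, lvC]; norm_num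
    rw [hw, sum_π]
    rcases fin4_cases i with rfl | rfl | rfl | rfl
    · rw [xs0, xs0, xs0, κ0]; norm_num [Ne.symm hAB, Ne.symm hAC]
    · rw [xs1, xs1, xs1, κ1]; norm_num [hAC, hBC]
    · rw [xs2, xs2, xs2, κ2]; norm_num [hAB, Ne.symm hBC]
    · rw [xs3, xs3, xs3, κ3]; norm_num [hAB, Ne.symm hBC]
  · intro i y hy h
    have hA := hy A memAπ; have hB := hy B memBπ; have hC := hy C memCπ
    have hsum : ∑ S ∈ partsπ, (1:ℝ) * y S = y A + y B + y C := by rw [sum_π]; ring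
    have hw : ∑ S ∈ partsπ, (1:ℝ) * lvol S = 1 := by rw [sum_π, lvA, lvB, lvC]; norm_num
    rw [hsum, hw]
    rcases fin4_cases i with rfl | rfl | rfl | rfl
    · simp only [νs0, Vπ1, xs0] at h
      rw [κ0]; norm_num [Ne.symm hAB] at h ⊢; linarith
    · simp only [νs1, Vπ2, xs1] at h
      rw [κ1]; norm_num [hAC] at h ⊢; linarith
    · simp only [νs2, Vπ3, xs2] at h
      rw [κ2]; norm_num [Ne.symm hBC] at h ⊢; linarith
    · simp only [νs3, Vπ4, xs3] at h
      rw [κ3]; norm_num [Ne.symm hBC] at h ⊢; linarith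
  · intro S _; norm_num
  · intro i S _
    rcases fin4_cases i with rfl | rfl | rfl | rfl <;>
      [rw [ys0]; rw [ys1]; rw [ys2]; rw [ys3]] <;> split <;> norm_num
  · intro S hS
    simp only [partsρ, Finset.mem_insert, Finset.mem_singleton] at hS
    rw [Fin.sum_univ_four, ys0, ys1, ys2, ys3]
    rcases hS with rfl | rfl | rfl | rfl
    · rw [lvA]; norm_num [hAB, hAC₁, hAC₂]
    · rw [lvB]; norm_num [Ne.symm hAB, hBC₁, hBC₂]
    · rw [lvC₁]; norm_num [Ne.symm hBC₁, Ne.symm hAC₁, hC₁C₂]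
    · rw [lvC₂]; norm_num [Ne.symm hBC₂, Ne.symm hAC₂, Ne.symm hC₁C₂]
  · intro i
    have hw : ∑ S ∈ partsρ, (1:ℝ) * lvol S = 1 := by
      rw [sum_ρ, lvA, lvB, lvC₁, lvC₂]; norm_num
    rw [hw, sum_ρ]
    rcases fin4_cases i with rfl | rfl | rfl | rfl
    · rw [ys0, ys0, ys0, ys0, κ0]; norm_num [hAB, Ne.symm hBC₁, Ne.symm hBC₂]
    · rw [ys1, ys1, ys1, ys1, κ1]; norm_num [Ne.symm hAB, Ne.symm hAC₁, Ne.symm hAC₂]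
    · rw [ys2, ys2, ys2, ys2, κ2]; norm_num [hAC₁, hBC₁, Ne.symm hC₁C₂]
    · rw [ys3, ys3, ys3, ys3, κ3]; norm_num [hAC₂, hBC₂, hC₁C₂]
  · intro i y hy h
    have hA := hy A memAρ; have hB := hy B memBρ
    have hC1 := hy C₁ memC₁ρ; have hC2 := hy C₂ memC₂ρ
    have hsum : ∑ S ∈ partsρ, (1:ℝ) * y S = y A + y B + y C₁ + y C₂ := by rw [sum_ρ]; ring
    have hw : ∑ S ∈ partsρ, (1:ℝ) * lvol S = 1 := by
      rw [sum_ρ, lvA, lvB, lvC₁, lvC₂]; norm_num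
    rw [hsum, hw]
    rcases fin4_cases i with rfl | rfl | rfl | rfl
    · simp only [νs0, Vρ1, ys0] at h
      rw [κ0]; norm_num [hAB] at h ⊢; linarith
    · simp only [νs1, Vρ2, ys1] at h
      rw [κ1]; norm_num [Ne.symm hAC₁, Ne.symm hAC₂] at h ⊢; linarith
    · simp only [νs2, Vρ3, ys2] at h
      rw [κ2]; norm_num [hBC₁] at h ⊢; linarith
    · simp only [νs3, Vρ4, ys3] at h
      rw [κ3]; norm_num [hBC₂] at h ⊢; linarith
  · rw [xs0]; norm_num
  · intro S _ hne; rw [xs0]; simp [hne]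
  · rw [ys0]; norm_num
  · intro S _ hne; rw [ys0]; simp [hne]

end Stmt12

end
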